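/- Fix T ≥ 1, B > 1 and p ∈ [0,1]. Define the stopping rule s* by s*(X) = min{ i ∈ {1,…,T} : X_i = 1 and p·(T−i) ≥ B−1 } (and s*(X) = T+1 if no such i exists). Then s* is adapted, and it is Bayesian optimal: for every adapted stopping rule s, E_p[cost(s*, X)] ≤ E_p[cost(s, X)]. In particular, if p·(T−1) < B−1 then the rule that never stops minimizes the expected cost. -/
import Mathlib


open Finset

/-- An adapted stopping rule for horizon `T`: it takes values in `{1,…,T+1}` and its value is
determined by the coordinates `1,…,min(s(X),T)` of the input. -/
def Adapted (T : ℕ) (s : (Fin T → Bool) → ℕ) : Prop :=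
  (∀ X, 1 ≤ s X ∧ s X ≤ T + 1) ∧
  ∀ X Y : Fin T → Bool, (∀ i : Fin T, (i : ℕ) < min (s X) T → X i = Y i) → s Y = s X

/-- Cost of the stopping rule `s` on input `X`: rent (cost 1) on each good-weather day strictly
before the stopping day, plus the stopping cost `B` if it stops by day `T`. -/
noncomputable def cost (T : ℕ) (B : ℝ) (s : (Fin T → Bool) → ℕ) (X : Fin T → Bool) : ℝ :=
  (∑ i : Fin T, if (i : ℕ) + 1 < s X ∧ X i = true then (1 : ℝ) else 0)
    + (if s X ≤ T then B else 0)

/-- Number of good-weather days in input `X`. -/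
def good (T : ℕ) (X : Fin T → Bool) : ℕ := (Finset.univ.filter fun i => X i = true).card

/-- Expectation over the i.i.d. Bernoulli(p) distribution on inputs. -/
noncomputable def Ep (T : ℕ) (p : ℝ) (f : (Fin T → Bool) → ℝ) : ℝ :=
  ∑ X : Fin T → Bool, p ^ good T X * (1 - p) ^ (T - good T X) * f X

/-- The offline (hindsight) optimum on input `X`. -/
noncomputable def OPTX (T : ℕ) (B : ℝ) (X : Fin T → Bool) : ℝ := min (good T X : ℝ) B

open Classical in
/-- The Bayesian optimal stopping rule for i.i.d. probability `p`: stop on the first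
good-weather day `i` (1-indexed) with `p·(T−i) ≥ B−1`, and never stop otherwise. -/
noncomputable def sStar (T : ℕ) (B p : ℝ) (X : Fin T → Bool) : ℕ :=
  if h : (Finset.univ.filter fun i : Fin T =>
      X i = true ∧ B - 1 ≤ p * ((T : ℝ) - ((i : ℕ) + 1))).Nonempty
  then (((Finset.univ.filter fun i : Fin T =>
      X i = true ∧ B - 1 ≤ p * ((T : ℝ) - ((i : ℕ) + 1))).min' h : Fin T) : ℕ) + 1
  else T + 1

/- ===== value function ===== -/

noncomputable def u (B p : ℝ) : ℕ → ℝ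
  | 0 => 0
  | n+1 => p * min B (1 + u B p n) + (1 - p) * u B p n

lemma u_le_B {B p : ℝ} (hB : 0 ≤ B) (hp0 : 0 ≤ p) (hp1 : p ≤ 1) (n : ℕ) : u B p n ≤ B := by
  induction n with
  | zero => simpa [u] using hB
  | succ n ih =>
    have h1 : min B (1 + u B p n) ≤ B := min_le_left _ _
    have h2 : (0:ℝ) ≤ 1 - p := by linarith
    calc u B p (n+1) = p * min B (1 + u B p n) + (1 - p) * u B p n := rfl
      _ ≤ p * B + (1 - p) * B := by
          apply add_le_add (mul_le_mul_of_nonneg_left h1 hp0) (mul_le_mul_of_nonneg_left ih h2)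
      _ = B := by ring

lemma u_le_pn {B p : ℝ} (hp0 : 0 ≤ p) (hp1 : p ≤ 1) (n : ℕ) : u B p n ≤ p * n := by
  induction n with
  | zero => simp [u]
  | succ n ih =>
    have h1 : min B (1 + u B p n) ≤ 1 + u B p n := min_le_right _ _
    have h2 : (0:ℝ) ≤ 1 - p := by linarith
    calc u B p (n+1) = p * min B (1 + u B p n) + (1 - p) * u B p n := rfl
      _ ≤ p * (1 + u B p n) + (1 - p) * u B p n := by
          exact add_le_add (mul_le_mul_of_nonneg_left h1 hp0) le_rfl
      _ = p + u B p n := by ring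
      _ ≤ p + p * n := by linarith
      _ = p * (n+1 : ℕ) := by push_cast; ring

lemma u_ge {B p : ℝ} (hB : 1 ≤ B) (hp0 : 0 ≤ p) (hp1 : p ≤ 1) (n : ℕ) :
    min (B - 1) (p * n) ≤ u B p n := by
  induction n with
  | zero => simp [u]
  | succ n ih =>
    have h2 : (0:ℝ) ≤ 1 - p := by linarith
    rcases le_total (B-1) (p*n) with h | h
    · have h1 : B - 1 ≤ u B p n := by rw [min_eq_left h] at ih; exact ih
      have hm : min B (1 + u B p n) = B := min_eq_left (by linarith)
      have h3 : B - 1 ≤ u B p (n+1) := by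
        show B - 1 ≤ p * min B (1 + u B p n) + (1 - p) * u B p n
        rw [hm]; nlinarith
      exact le_trans (min_le_left _ _) h3
    · have h1 : p * n ≤ u B p n := by rw [min_eq_right h] at ih; exact ih
      have h4 : 1 + p * n ≤ min B (1 + u B p n) :=
        le_min (by linarith) (by linarith)
      have h5 : p * ((n:ℝ)+1) ≤ u B p (n+1) := by
        show _ ≤ p * min B (1 + u B p n) + (1 - p) * u B p n
        nlinarith [mul_le_mul_of_nonneg_left h4 hp0]
      refine le_trans (min_le_right _ _) ?_
      calc p * ((n+1 : ℕ) : ℝ) = p * ((n:ℝ)+1) := by push_cast; ring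
        _ ≤ u B p (n+1) := h5

/- ===== Ep lemmas ===== -/

lemma good_le (T : ℕ) (X : Fin T → Bool) : good T X ≤ T := by
  classical
  calc good T X ≤ (univ : Finset (Fin T)).card := card_filter_le _ _
    _ = T := by simp

lemma good_cons (T : ℕ) (b : Bool) (Y : Fin T → Bool) :
    good (T+1) (Fin.cons b Y) = b.toNat + good T Y := by
  classical
  simp only [good, Finset.card_filter, Fin.sum_univ_succ, Fin.cons_zero, Fin.cons_succ]
  cases b <;> simp

lemma sum_pi_succ (T : ℕ) (g : (Fin (T+1) → Bool) → ℝ) :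
    ∑ X : Fin (T+1) → Bool, g X
      = (∑ Y : Fin T → Bool, g (Fin.cons true Y)) + ∑ Y : Fin T → Bool, g (Fin.cons false Y) := by
  classical
  rw [← Equiv.sum_comp (Fin.consEquiv (fun _ : Fin (T+1) => Bool)) g, Fintype.sum_prod_type,
    Fintype.sum_bool]
  rfl

lemma weight_cons (T : ℕ) (p : ℝ) (b : Bool) (Y : Fin T → Bool) :
    p ^ good (T+1) (Fin.cons b Y) * (1-p) ^ (T+1 - good (T+1) (Fin.cons b Y))
      = (cond b p (1-p)) * (p ^ good T Y * (1-p) ^ (T - good T Y)) := by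
  have hg := good_le T Y
  rw [good_cons]
  cases b
  · simp only [Bool.toNat_false, Nat.zero_add, Bool.cond_false]
    have h1 : T + 1 - good T Y = (T - good T Y) + 1 := by omega
    rw [h1, pow_succ]; ring
  · simp only [Bool.toNat_true, Bool.cond_true]
    have h1 : T + 1 - (1 + good T Y) = T - good T Y := by omega
    rw [h1, pow_add]; ring

lemma Ep_succ (T : ℕ) (p : ℝ) (f : (Fin (T+1) → Bool) → ℝ) :
    Ep (T+1) p f = p * Ep T p (fun Y => f (Fin.cons true Y))
      + (1 - p) * Ep T p (fun Y => f (Fin.cons false Y)) := by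
  classical
  rw [Ep, sum_pi_succ, Ep, Ep, Finset.mul_sum, Finset.mul_sum]
  congr 1 <;> refine Finset.sum_congr rfl fun Y _ => ?_
  · rw [weight_cons]; simp only [Bool.cond_true]; ring
  · rw [weight_cons]; simp only [Bool.cond_false]; ring

lemma Ep_zero (p : ℝ) (f : (Fin 0 → Bool) → ℝ) : Ep 0 p f = f default := by
  simp [Ep, good]
  congr 1
  exact Subsingleton.elim _ _

lemma Ep_const (T : ℕ) (p : ℝ) (c : ℝ) : Ep T p (fun _ => c) = c := by
  induction T with
  | zero => simp [Ep_zero]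
  | succ T ih => rw [Ep_succ]; simp only [ih]; ring

lemma Ep_add_const (T : ℕ) (p : ℝ) (a : ℝ) (f : (Fin T → Bool) → ℝ) :
    Ep T p (fun X => a + f X) = a + Ep T p f := by
  induction T with
  | zero => simp [Ep_zero]
  | succ T ih => rw [Ep_succ, Ep_succ]; simp only [ih]; ring

lemma Ep_congr (T : ℕ) (p : ℝ) (f g : (Fin T → Bool) → ℝ) (h : ∀ X, f X = g X) :
    Ep T p f = Ep T p g := by
  unfold Ep; exact Finset.sum_congr rfl fun X _ => by rw [h]

lemma Ep_mono (T : ℕ) (p : ℝ) (hp0 : 0 ≤ p) (hp1 : p ≤ 1) (f g : (Fin T → Bool) → ℝ)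
    (h : ∀ X, f X ≤ g X) : Ep T p f ≤ Ep T p g := by
  unfold Ep
  apply Finset.sum_le_sum
  intro X _
  have : (0:ℝ) ≤ p ^ good T X * (1 - p) ^ (T - good T X) :=
    mul_nonneg (pow_nonneg hp0 _) (pow_nonneg (by linarith) _)
  exact mul_le_mul_of_nonneg_left (h X) this

/- ===== cost lemmas ===== -/

lemma cost_of_eq_one (T : ℕ) (B : ℝ) (s : (Fin (T+1) → Bool) → ℕ) (X : Fin (T+1) → Bool)
    (h : s X = 1) : cost (T+1) B s X = B := by
  rw [cost, h]
  have h0 : ∀ i : Fin (T+1), ¬ ((i : ℕ) + 1 < 1 ∧ X i = true) := by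
    intro i hi; exact absurd hi.1 (by omega)
  simp [h0]

lemma cost_cons (T : ℕ) (B : ℝ) (s : (Fin (T+1) → Bool) → ℕ) (s' : (Fin T → Bool) → ℕ)
    (b : Bool) (Y : Fin T → Bool) (h1 : 1 ≤ s' Y) (h : s (Fin.cons b Y) = s' Y + 1) :
    cost (T+1) B s (Fin.cons b Y) = (b.toNat : ℝ) + cost T B s' Y := by
  rw [cost, cost, h, Fin.sum_univ_succ]
  have e0 : (if ((0 : Fin (T+1)) : ℕ) + 1 < s' Y + 1 ∧ (Fin.cons b Y : Fin (T+1) → Bool) 0 = true then (1:ℝ) else 0)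
      = (b.toNat : ℝ) := by
    simp only [Fin.val_zero, Fin.cons_zero]
    cases b
    · simp
    · simp only [Bool.toNat_true, Nat.cast_one]
      rw [if_pos ⟨by omega, trivial⟩]
  have e1 : ∀ i : Fin T,
      (if ((i.succ : Fin (T+1)) : ℕ) + 1 < s' Y + 1 ∧ (Fin.cons b Y : Fin (T+1) → Bool) i.succ = true then (1:ℝ) else 0)
      = (if (i : ℕ) + 1 < s' Y ∧ Y i = true then (1:ℝ) else 0) := by
    intro i
    simp only [Fin.val_succ, Fin.cons_succ]
    congr 1
    simp only [eq_iff_iff]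
    constructor <;> rintro ⟨hh, hy⟩ <;> exact ⟨by omega, hy⟩
  rw [e0, Finset.sum_congr rfl fun i _ => e1 i]
  have e2 : (if s' Y + 1 ≤ T + 1 then B else 0) = (if s' Y ≤ T then B else 0) := by simp
  rw [e2]
  ring

lemma one_le_sStar (T : ℕ) (B p : ℝ) (X : Fin T → Bool) : 1 ≤ sStar T B p X := by
  classical
  rw [sStar]
  split <;> omega

lemma sStar_le (T : ℕ) (B p : ℝ) (X : Fin T → Bool) : sStar T B p X ≤ T + 1 := by
  classical
  rw [sStar]
  split
  · rename_i h
    have := ((Finset.univ.filter fun i : Fin T =>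
      X i = true ∧ B - 1 ≤ p * ((T : ℝ) - ((i : ℕ) + 1))).min' h).isLt
    omega
  · omega

lemma adapted_sStar (T : ℕ) (B p : ℝ) : Adapted T (sStar T B p) := by
  classical
  refine ⟨fun X => ⟨one_le_sStar T B p X, sStar_le T B p X⟩, ?_⟩
  intro X Y hagree
  by_cases hX : (Finset.univ.filter fun i : Fin T =>
      X i = true ∧ B - 1 ≤ p * ((T : ℝ) - ((i : ℕ) + 1))).Nonempty
  · set FX := Finset.univ.filter fun i : Fin T =>
      X i = true ∧ B - 1 ≤ p * ((T : ℝ) - ((i : ℕ) + 1)) with hFX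
    set i0 := FX.min' hX with hi0
    have hvX : sStar T B p X = (i0 : ℕ) + 1 := by rw [sStar, dif_pos hX]
    have hlt : (i0 : ℕ) < T := i0.isLt
    have hag : ∀ j : Fin T, (j : ℕ) ≤ (i0 : ℕ) → X j = Y j := by
      intro j hj
      apply hagree
      rw [hvX]
      omega
    have hmemX : i0 ∈ FX := FX.min'_mem hX
    have hi0X : X i0 = true ∧ B - 1 ≤ p * ((T : ℝ) - ((i0 : ℕ) + 1)) := by
      have := hmemX; rw [hFX, Finset.mem_filter] at this; exact this.2
    have hmemY : i0 ∈ (Finset.univ.filter fun i : Fin T =>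
        Y i = true ∧ B - 1 ≤ p * ((T : ℝ) - ((i : ℕ) + 1))) := by
      rw [Finset.mem_filter]
      exact ⟨Finset.mem_univ _, by rw [← hag i0 le_rfl]; exact hi0X⟩
    have hY : (Finset.univ.filter fun i : Fin T =>
        Y i = true ∧ B - 1 ≤ p * ((T : ℝ) - ((i : ℕ) + 1))).Nonempty := ⟨i0, hmemY⟩
    have hvY : sStar T B p Y = (((Finset.univ.filter fun i : Fin T =>
        Y i = true ∧ B - 1 ≤ p * ((T : ℝ) - ((i : ℕ) + 1))).min' hY : Fin T) : ℕ) + 1 := by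
      rw [sStar, dif_pos hY]
    set j0 := (Finset.univ.filter fun i : Fin T =>
        Y i = true ∧ B - 1 ≤ p * ((T : ℝ) - ((i : ℕ) + 1))).min' hY with hj0
    have hj0le : j0 ≤ i0 := Finset.min'_le _ _ hmemY
    have hj0mem := Finset.min'_mem _ hY
    rw [← hj0] at hj0mem
    have hj0Y : Y j0 = true ∧ B - 1 ≤ p * ((T : ℝ) - ((j0 : ℕ) + 1)) := by
      rw [Finset.mem_filter] at hj0mem; exact hj0mem.2
    have hj0X : j0 ∈ FX := by
      rw [hFX, Finset.mem_filter]
      refine ⟨Finset.mem_univ _, ?_⟩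
      rw [hag j0 hj0le]
      exact hj0Y
    have : i0 ≤ j0 := Finset.min'_le _ _ hj0X
    have heq : j0 = i0 := le_antisymm hj0le this
    rw [hvY, hvX, heq]
  · have hvX : sStar T B p X = T + 1 := by rw [sStar, dif_neg hX]
    have hXY : X = Y := by
      funext i
      apply hagree
      rw [hvX]
      simp [i.isLt]
    rw [← hXY, hvX]

open Classical in
lemma sStar_cons (T : ℕ) (B p : ℝ) (b : Bool) (Y : Fin T → Bool) :
    sStar (T+1) B p (Fin.cons b Y) =
      if b = true ∧ B - 1 ≤ p * T then 1 else sStar T B p Y + 1 := by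
  classical
  set F1 := (Finset.univ.filter fun i : Fin (T+1) =>
      (Fin.cons b Y : Fin (T+1) → Bool) i = true
        ∧ B - 1 ≤ p * (((T+1 : ℕ) : ℝ) - ((i : ℕ) + 1))) with hF1
  set F0 := (Finset.univ.filter fun j : Fin T =>
      Y j = true ∧ B - 1 ≤ p * ((T : ℝ) - ((j : ℕ) + 1))) with hF0
  have hmem0 : (0 : Fin (T+1)) ∈ F1 ↔ (b = true ∧ B - 1 ≤ p * T) := by
    rw [hF1, Finset.mem_filter]
    constructor
    · rintro ⟨-, hb, hc⟩
      refine ⟨by simpa using hb, ?_⟩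
      have : (((T+1 : ℕ) : ℝ) - (((0 : Fin (T+1)) : ℕ) + 1)) = (T : ℝ) := by
        push_cast; simp
      rwa [this] at hc
    · rintro ⟨hb, hc⟩
      refine ⟨Finset.mem_univ _, by simpa using hb, ?_⟩
      have : (((T+1 : ℕ) : ℝ) - (((0 : Fin (T+1)) : ℕ) + 1)) = (T : ℝ) := by
        push_cast; simp
      rwa [this]
  have hmems : ∀ j : Fin T, j.succ ∈ F1 ↔ j ∈ F0 := by
    intro j
    rw [hF1, hF0, Finset.mem_filter, Finset.mem_filter]
    have hc : (((T+1 : ℕ) : ℝ) - (((j.succ : Fin (T+1)) : ℕ) + 1)) = ((T : ℝ) - ((j : ℕ) + 1)) := by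
      rw [Fin.val_succ]; push_cast; ring
    constructor
    · rintro ⟨-, hb, hcc⟩
      exact ⟨Finset.mem_univ _, by simpa using hb, by rwa [hc] at hcc⟩
    · rintro ⟨-, hb, hcc⟩
      exact ⟨Finset.mem_univ _, by simpa using hb, by rwa [hc]⟩
  by_cases hcond : b = true ∧ B - 1 ≤ p * T
  · rw [if_pos hcond]
    have h0 : (0 : Fin (T+1)) ∈ F1 := hmem0.2 hcond
    have hne : F1.Nonempty := ⟨0, h0⟩
    have hmin : F1.min' hne = 0 :=
      le_antisymm (Finset.min'_le _ _ h0) (Fin.zero_le _)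
    rw [sStar, dif_pos (show (Finset.univ.filter _).Nonempty from hne)]
    rw [show (Finset.univ.filter fun i : Fin (T+1) =>
        (Fin.cons b Y : Fin (T+1) → Bool) i = true
          ∧ B - 1 ≤ p * (((T+1 : ℕ) : ℝ) - ((i : ℕ) + 1))).min' hne = 0 from hmin]
    rfl
  · rw [if_neg hcond]
    have h0 : (0 : Fin (T+1)) ∉ F1 := fun h => hcond (hmem0.1 h)
    by_cases hne0 : F0.Nonempty
    · set j0 := F0.min' hne0 with hj0
      have hj0mem : j0 ∈ F0 := F0.min'_mem hne0
      have hsmem : j0.succ ∈ F1 := (hmems j0).2 hj0mem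
      have hne1 : F1.Nonempty := ⟨_, hsmem⟩
      have hminmem := F1.min'_mem hne1
      have hminne : F1.min' hne1 ≠ 0 := fun h => h0 (h ▸ hminmem)
      obtain ⟨k, hk⟩ := Fin.eq_succ_of_ne_zero hminne
      have hkF0 : k ∈ F0 := (hmems k).1 (hk ▸ hminmem)
      have h1 : F1.min' hne1 ≤ j0.succ := Finset.min'_le _ _ hsmem
      have h2 : j0.succ ≤ F1.min' hne1 := by
        rw [hk, Fin.succ_le_succ_iff]
        exact Finset.min'_le _ _ hkF0
      have hmin1 : F1.min' hne1 = j0.succ := le_antisymm h1 h2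
      have lhs : sStar (T+1) B p (Fin.cons b Y) = ((j0.succ : Fin (T+1)) : ℕ) + 1 := by
        rw [sStar, dif_pos (show (Finset.univ.filter _).Nonempty from hne1)]
        rw [show (Finset.univ.filter fun i : Fin (T+1) =>
          (Fin.cons b Y : Fin (T+1) → Bool) i = true
            ∧ B - 1 ≤ p * (((T+1 : ℕ) : ℝ) - ((i : ℕ) + 1))).min' hne1 = j0.succ from hmin1]
      have rhs : sStar T B p Y = ((j0 : Fin T) : ℕ) + 1 := by
        rw [sStar, dif_pos (show (Finset.univ.filter _).Nonempty from hne0)]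
      rw [lhs, rhs, Fin.val_succ]
    · have hne1 : ¬ F1.Nonempty := by
        rintro ⟨i, hi⟩
        rcases eq_or_ne i 0 with rfl | hne
        · exact h0 hi
        · obtain ⟨k, rfl⟩ := Fin.eq_succ_of_ne_zero hne
          exact hne0 ⟨k, (hmems k).1 hi⟩
      rw [sStar, dif_neg (show ¬ (Finset.univ.filter _).Nonempty from hne1),
        sStar, dif_neg (show ¬ (Finset.univ.filter _).Nonempty from hne0)]

/- ===== key lower bound ===== -/

lemma branch_ge {T : ℕ} {B p : ℝ} (hB : 1 < B) (hp0 : 0 ≤ p) (hp1 : p ≤ 1)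
    (s : (Fin (T+1) → Bool) → ℕ) (hs : Adapted (T+1) s) (b : Bool)
    (IH : ∀ s' : (Fin T → Bool) → ℕ, Adapted T s' → u B p T ≤ Ep T p (cost T B s')) :
    min B ((b.toNat : ℝ) + u B p T) ≤ Ep T p (fun Y => cost (T+1) B s (Fin.cons b Y)) := by
  by_cases h1 : s (Fin.cons b (fun _ => false)) = 1
  · have hall : ∀ Y, s (Fin.cons b Y) = 1 := by
      intro Y
      have heq := hs.2 (Fin.cons b fun _ => false) (Fin.cons b Y) (by
        intro i hi
        rw [h1] at hi
        have hi0 : i = 0 := by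
          apply Fin.ext
          simp only [Fin.val_zero]
          omega
        rw [hi0]
        simp)
      rw [heq, h1]
    have hEq : Ep T p (fun Y => cost (T+1) B s (Fin.cons b Y)) = B := by
      rw [Ep_congr _ _ _ (fun _ => B) (fun Y => cost_of_eq_one T B s _ (hall Y)), Ep_const]
    rw [hEq]
    exact min_le_left _ _
  · have h2 : ∀ Y, 2 ≤ s (Fin.cons b Y) := by
      intro Y
      have hb1 := (hs.1 (Fin.cons b Y)).1
      rcases Nat.lt_or_ge (s (Fin.cons b Y)) 2 with h | h
      · exfalso
        have hY1 : s (Fin.cons b Y) = 1 := by omega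
        have := hs.2 (Fin.cons b Y) (Fin.cons b fun _ => false) (by
          intro i hi
          rw [hY1] at hi
          have hi0 : i = 0 := by
            apply Fin.ext
            simp only [Fin.val_zero]
            omega
          rw [hi0]; simp)
        omega
      · exact h
    set s' : (Fin T → Bool) → ℕ := fun Y => s (Fin.cons b Y) - 1 with hs'
    have hval : ∀ Y, s (Fin.cons b Y) = s' Y + 1 := by
      intro Y; have := h2 Y; simp only [hs']; omega
    have hs'a : Adapted T s' := by
      constructor
      · intro Y
        have ha := h2 Y
        have hb := (hs.1 (Fin.cons b Y)).2
        simp only [hs']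
        constructor <;> omega
      · intro Y Z hag
        have : s (Fin.cons b Z) = s (Fin.cons b Y) := by
          apply hs.2
          intro i hi
          rcases Fin.eq_zero_or_eq_succ i with rfl | ⟨j, rfl⟩
          · simp
          · simp only [Fin.cons_succ]
            apply hag
            rw [hval Y] at hi
            rw [Fin.val_succ] at hi
            omega
        simp only [hs', this]
    have hc : ∀ Y, cost (T+1) B s (Fin.cons b Y) = (b.toNat : ℝ) + cost T B s' Y := by
      intro Y
      exact cost_cons T B s s' b Y (hs'a.1 Y).1 (hval Y)
    rw [Ep_congr _ _ _ _ hc, Ep_add_const]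
    refine le_trans (min_le_right _ _) ?_
    have := IH s' hs'a
    linarith

lemma key (B p : ℝ) (hB : 1 < B) (hp0 : 0 ≤ p) (hp1 : p ≤ 1) :
    ∀ T, ∀ s, Adapted T s → u B p T ≤ Ep T p (cost T B s) := by
  intro T
  induction T with
  | zero =>
    intro s hs
    rw [Ep_zero]
    have h1 := (hs.1 default).1
    have hc : cost 0 B s default = 0 := by
      rw [cost]
      rw [if_neg (by omega)]
      simp
    rw [hc]
    simp [u]
  | succ T ih =>
    intro s hs
    rw [Ep_succ]
    have ht := branch_ge hB hp0 hp1 s hs true ih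
    have hf := branch_ge hB hp0 hp1 s hs false ih
    have ht' : min B (1 + u B p T) ≤ Ep T p (fun Y => cost (T+1) B s (Fin.cons true Y)) := by
      simpa only [Bool.toNat_true, Nat.cast_one] using ht
    have hf' : u B p T ≤ Ep T p (fun Y => cost (T+1) B s (Fin.cons false Y)) := by
      refine le_trans (le_min (u_le_B (by linarith) hp0 hp1 T) ?_) hf
      simp
    calc u B p (T+1) = p * min B (1 + u B p T) + (1-p) * u B p T := rfl
      _ ≤ _ := add_le_add (mul_le_mul_of_nonneg_left ht' hp0)
          (mul_le_mul_of_nonneg_left hf' (by linarith))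

lemma star_val (B p : ℝ) (hB : 1 < B) (hp0 : 0 ≤ p) (hp1 : p ≤ 1) :
    ∀ T, Ep T p (cost T B (sStar T B p)) = u B p T := by
  intro T
  induction T with
  | zero =>
    rw [Ep_zero]
    have h := one_le_sStar 0 B p default
    have hc : cost 0 B (sStar 0 B p) default = 0 := by
      rw [cost, if_neg (by omega)]
      simp
    rw [hc]
    simp [u]
  | succ T ih =>
    rw [Ep_succ]
    by_cases hc : B - 1 ≤ p * T
    · have ht : ∀ Y, cost (T+1) B (sStar (T+1) B p) (Fin.cons true Y) = B := by
        intro Y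
        apply cost_of_eq_one
        rw [sStar_cons, if_pos ⟨rfl, hc⟩]
      have hf : ∀ Y : Fin T → Bool, cost (T+1) B (sStar (T+1) B p) (Fin.cons false Y)
          = ((false.toNat : ℕ) : ℝ) + cost T B (sStar T B p) Y := by
        intro Y
        refine cost_cons T B _ _ false Y (one_le_sStar T B p Y) ?_
        rw [sStar_cons, if_neg (by rintro ⟨h', -⟩; exact Bool.false_ne_true h')]
      rw [Ep_congr _ _ _ _ ht, Ep_congr _ _ _ _ hf, Ep_const, Ep_add_const, ih]
      have hu : B - 1 ≤ u B p T := by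
        have := u_ge (le_of_lt hB) hp0 hp1 T
        rwa [min_eq_left hc] at this
      have hmin : min B (1 + u B p T) = B := min_eq_left (by linarith)
      calc p * B + (1-p) * (((false.toNat : ℕ) : ℝ) + u B p T)
          = p * min B (1 + u B p T) + (1-p) * u B p T := by rw [hmin]; norm_num
        _ = u B p (T+1) := rfl
    · have hcomp : ∀ (b : Bool) (Y : Fin T → Bool),
          cost (T+1) B (sStar (T+1) B p) (Fin.cons b Y)
            = ((b.toNat : ℕ) : ℝ) + cost T B (sStar T B p) Y := by
        intro b Y
        refine cost_cons T B _ _ b Y (one_le_sStar T B p Y) ?_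
        rw [sStar_cons, if_neg (by rintro ⟨-, hcc⟩; exact hc hcc)]
      rw [Ep_congr _ _ _ _ (hcomp true), Ep_congr _ _ _ _ (hcomp false),
        Ep_add_const, Ep_add_const, ih]
      have hu : u B p T ≤ p * T := u_le_pn hp0 hp1 T
      have hmin : min B (1 + u B p T) = 1 + u B p T := by
        apply min_eq_right
        have := not_le.1 hc
        linarith
      calc p * (((true.toNat : ℕ) : ℝ) + u B p T) + (1-p) * (((false.toNat : ℕ) : ℝ) + u B p T)
          = p * min B (1 + u B p T) + (1-p) * u B p T := by rw [hmin]; norm_num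
        _ = u B p (T+1) := rfl

/-- The rule `sStar` is adapted and Bayesian optimal: it minimizes the
expected cost under the i.i.d. Bernoulli(p) input distribution among all adapted stopping
rules. In particular, if `p(T−1) < B−1` then never stopping minimizes the expected cost. -/
theorem bayesian_optimal_rule
    (T : ℕ) (hT : 1 ≤ T) (B : ℝ) (hB : 1 < B) (p : ℝ) (hp : p ∈ Set.Icc (0 : ℝ) 1) :
    Adapted T (sStar T B p) ∧
    (∀ s : (Fin T → Bool) → ℕ, Adapted T s →
      Ep T p (cost T B (sStar T B p)) ≤ Ep T p (cost T B s)) ∧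
    (p * ((T : ℝ) - 1) < B - 1 →
      ∀ s : (Fin T → Bool) → ℕ, Adapted T s →
        Ep T p (cost T B fun _ => T + 1) ≤ Ep T p (cost T B s)) := by
  obtain ⟨hp0, hp1⟩ := hp
  have part2 : ∀ s : (Fin T → Bool) → ℕ, Adapted T s →
      Ep T p (cost T B (sStar T B p)) ≤ Ep T p (cost T B s) := by
    intro s hs
    rw [star_val B p hB hp0 hp1 T]
    exact key B p hB hp0 hp1 T s hs
  refine ⟨adapted_sStar T B p, part2, ?_⟩
  intro hcond s hs
  have hnever : sStar T B p = fun _ => T + 1 := by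
    funext X
    rw [sStar, dif_neg]
    rintro ⟨i, hi⟩
    rw [Finset.mem_filter] at hi
    have hc := hi.2.2
    have hle : ((T : ℝ) - ((i : ℕ) + 1)) ≤ (T : ℝ) - 1 := by
      have : (0 : ℝ) ≤ (i : ℕ) := Nat.cast_nonneg _
      linarith
    have : p * ((T : ℝ) - ((i : ℕ) + 1)) ≤ p * ((T : ℝ) - 1) :=
      mul_le_mul_of_nonneg_left hle hp0
    linarith
  rw [← hnever]
  exact part2 s hs
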